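/- Let λ ≠ 0, α > 0, and let (T_n)_{n≥1} be a family of functions T_n : Δ_n → ℝ satisfying the pseudo-additive strong additivity axiom: for all n, m ≥ 1 and every joint distribution R ∈ Δ_{nm} with strictly positive marginal P, T_{nm}(R) = T_n(P) + C + λ·T_n(P)·C where C = Σ_k p^{(α)}_k·T_m(Q_{|k}). Then for every n ≥ 1, T_{2^n}(U_{2^n}) = ((1 + λ·T_2(U_2))^n − 1)/λ. -/

import Mathlib

open Finset

noncomputable section

/-- `p` is a probability distribution on `Fin n`. -/
def IsDist {n : ℕ} (p : Fin n → ℝ) : Prop := (∀ i, 0 ≤ p i) ∧ ∑ i, p i = 1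

/-- The uniform distribution on `Fin n`. -/
def unif (n : ℕ) : Fin n → ℝ := fun _ => (n : ℝ)⁻¹

/-- Flatten a joint distribution `r : Fin n → Fin m → ℝ` into a vector on `Fin (n*m)`. -/
def joint {n m : ℕ} (r : Fin n → Fin m → ℝ) : Fin (n * m) → ℝ :=
  fun q => r (finProdFinEquiv.symm q).1 (finProdFinEquiv.symm q).2

/-- Marginal distribution of the first coordinate. -/
def marg {n m : ℕ} (r : Fin n → Fin m → ℝ) : Fin n → ℝ := fun k => ∑ l, r k l

/-- Conditional distribution of the second coordinate given the first equals `k`. -/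
def condDist {n m : ℕ} (r : Fin n → Fin m → ℝ) (k : Fin n) : Fin m → ℝ :=
  fun l => r k l / marg r k

/-- The `α`-escort distribution of `p` (with the convention `0 ^ α = 0`). -/
def escort (α : ℝ) {n : ℕ} (p : Fin n → ℝ) : Fin n → ℝ :=
  fun k => p k ^ α / ∑ i, p i ^ α

/-- Pseudo-additive strong additivity determines the entropy of the uniform
distribution on `2^n` points as the `n`-fold `λ`-deformed sum of `T₂(U₂)`. -/
theorem tsallis_uniform_values
    (lam α : ℝ) (hlam : lam ≠ 0) (hα : 0 < α)
    (T : (n : ℕ) → (Fin n → ℝ) → ℝ)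
    (hadd : ∀ n m, 1 ≤ n → 1 ≤ m → ∀ r : Fin n → Fin m → ℝ,
      IsDist (joint r) → (∀ k, 0 < marg r k) →
      T (n * m) (joint r) =
        T n (marg r) + (∑ k, escort α (marg r) k * T m (condDist r k)) +
        lam * T n (marg r) * (∑ k, escort α (marg r) k * T m (condDist r k))) :
    ∀ n : ℕ, 1 ≤ n →
      T (2 ^ n) (unif (2 ^ n)) = ((1 + lam * T 2 (unif 2)) ^ n - 1) / lam := by
  intro n hn
  induction n with
  | zero => omega
  | succ n ih =>
    rcases Nat.eq_zero_or_pos n with hn0 | hn1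
    · subst hn0
      have h2 : (2:ℕ) ^ (0 + 1) = 2 := rfl
      rw [h2, zero_add, pow_one]
      field_simp
      ring
    · -- inductive step
      have ih' := ih hn1
      set r : Fin (2 ^ n) → Fin 2 → ℝ := fun _ _ => ((2 : ℝ) ^ (n + 1))⁻¹ with hr
      have hpow : (0 : ℝ) < (2 : ℝ) ^ (n + 1) := by positivity
      have hmarg : marg r = unif (2 ^ n) := by
        funext k
        simp only [marg, unif, hr, Finset.sum_const, Finset.card_univ, Fintype.card_fin,
          nsmul_eq_mul, Nat.cast_ofNat, Nat.cast_pow]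
        rw [pow_succ]
        field_simp
      have hNpos : (0 : ℝ) < ((2 : ℕ) ^ n : ℝ) := by positivity
      have hmargpos : ∀ k, 0 < marg r k := by
        intro k
        rw [hmarg]
        simp only [unif]
        positivity
      have hcond : ∀ k, condDist r k = unif 2 := by
        intro k
        funext l
        rw [condDist, hmarg]
        simp only [condDist, hmarg, unif, hr, Nat.cast_pow, Nat.cast_ofNat]
        rw [pow_succ]
        field_simp
      have hjoint : joint r = unif (2 ^ n * 2) := by
        funext q
        simp only [joint, unif, hr, Nat.cast_mul, Nat.cast_pow, Nat.cast_ofNat]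
        rw [pow_succ]
      have hIsDist : IsDist (joint r) := by
        constructor
        · intro i
          simp only [joint, hr]
          positivity
        · simp only [joint, hr, Finset.sum_const, Finset.card_univ, Fintype.card_fin,
            nsmul_eq_mul, Nat.cast_mul, Nat.cast_pow, Nat.cast_ofNat]
          rw [pow_succ]
          field_simp
      have hesc : ∑ k, escort α (marg r) k * T 2 (condDist r k) = T 2 (unif 2) := by
        have h1 : ∀ k, condDist r k = unif 2 := hcond
        simp only [h1]
        rw [← Finset.sum_mul]
        have hsum : ∑ k, escort α (marg r) k = 1 := by
          unfold escort
          rw [← Finset.sum_div, div_self]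
          apply ne_of_gt
          apply Finset.sum_pos
          · intro i _
            exact Real.rpow_pos_of_pos (hmargpos i) α
          · exact Finset.univ_nonempty
        rw [hsum, one_mul]
      have key := hadd (2 ^ n) 2 (Nat.one_le_two_pow) (by norm_num) r hIsDist hmargpos
      rw [hesc, hmarg, ih'] at key
      rw [pow_succ 2 n, ← hjoint, key]
      field_simp
      ring
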